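/- Let x be an odd integer with x > 1 and let n be the number of distinct prime divisors of x. Then the number of primitive Pythagorean triples (x, y, a) having x as the odd leg — equivalently, the number of pairs of positive integers (t, l) with l odd, gcd(t, l) = 1 and x = l(l + 2t) — is exactly 2^{n−1}. -/

import Mathlib

section Helpers
open Finset

private lemma prod_pf (x : ℕ) (hx0 : x ≠ 0) :
    ∏ p ∈ x.primeFactors, p ^ x.factorization p = x := by
  rw [← Nat.support_factorization]
  exact Nat.factorization_prod_pow_eq_self hx0

private lemma unitary_of_subset (x : ℕ) (hx0 : x ≠ 0) {S : Finset ℕ}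
    (hS : S ⊆ x.primeFactors) :
    (∏ p ∈ S, p ^ x.factorization p) ∣ x ∧
      Nat.gcd (∏ p ∈ S, p ^ x.factorization p) (x / ∏ p ∈ S, p ^ x.factorization p) = 1 ∧
      (∏ p ∈ S, p ^ x.factorization p).primeFactors = S := by
  classical
  set d := ∏ p ∈ S, p ^ x.factorization p with hd
  set C := ∏ p ∈ x.primeFactors \ S, p ^ x.factorization p with hC
  have hprime : ∀ p ∈ S, p.Prime := fun p hp => Nat.prime_of_mem_primeFactors (hS hp)
  have hmul : C * d = x := by rw [hd, hC, Finset.prod_sdiff hS, prod_pf x hx0]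
  have hdvd : d ∣ x := ⟨C, by rw [mul_comm, hmul]⟩
  have hd0 : d ≠ 0 := by
    have : 0 < d := Finset.prod_pos fun p hp => pow_pos (hprime p hp).pos _
    omega
  have hfe : ∀ p ∈ S, x.factorization p ≠ 0 := by
    intro p hp
    have := hS hp
    rw [← Nat.support_factorization, Finsupp.mem_support_iff] at this
    exact this
  have hcop : Nat.Coprime d C := by
    refine Nat.Coprime.prod_left fun p hp => Nat.Coprime.prod_right fun q hq => ?_
    have hq' := Nat.prime_of_mem_primeFactors (Finset.mem_sdiff.mp hq).1
    have hne : p ≠ q := fun h => (Finset.mem_sdiff.mp hq).2 (h ▸ hp)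
    exact ((Nat.coprime_primes (hprime p hp) hq').mpr hne).pow _ _
  have hdiv : x / d = C := Nat.div_eq_of_eq_mul_left (Nat.pos_of_ne_zero hd0) hmul.symm
  refine ⟨hdvd, by rw [hdiv]; exact hcop, ?_⟩
  ext q
  simp only [Nat.mem_primeFactors, hd0, ne_eq, not_false_eq_true, and_true]
  constructor
  · rintro ⟨hq, hqd⟩
    rcases (hq.prime.dvd_finset_prod_iff _).mp hqd with ⟨p, hpS, hqp⟩
    have := hq.dvd_of_dvd_pow hqp
    rwa [(Nat.prime_dvd_prime_iff_eq hq (hprime p hpS)).mp this]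
  · intro hqS
    exact ⟨hprime q hqS, dvd_trans (dvd_pow_self q (hfe q hqS)) (Finset.dvd_prod_of_mem _ hqS)⟩

private lemma eq_prod_of_unitary (x : ℕ) (hx0 : x ≠ 0) {d : ℕ} (hdvd : d ∣ x)
    (hcop : Nat.gcd d (x / d) = 1) :
    ∏ p ∈ d.primeFactors, p ^ x.factorization p = d := by
  have hd0 : d ≠ 0 := fun h => hx0 (by simpa [h] using hdvd)
  have hx : d * (x / d) = x := Nat.mul_div_cancel' hdvd
  have hq0 : x / d ≠ 0 := by
    intro h; rw [h, mul_zero] at hx; exact hx0 hx.symm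
  have hfac : x.factorization = d.factorization + (x / d).factorization := by
    conv_lhs => rw [← hx]
    exact Nat.factorization_mul hd0 hq0
  have key : ∀ p ∈ d.primeFactors, p ^ x.factorization p = p ^ d.factorization p := by
    intro p hp
    have hp' := Nat.prime_of_mem_primeFactors hp
    have h0 : (x / d).factorization p = 0 := by
      apply Nat.factorization_eq_zero_of_not_dvd
      intro hpdvd
      have : p ∣ Nat.gcd d (x / d) :=
        Nat.dvd_gcd (Nat.dvd_of_mem_primeFactors hp) hpdvd
      rw [hcop, Nat.dvd_one] at this
      exact hp'.ne_one this
    rw [hfac, Finsupp.add_apply, h0, add_zero]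
  rw [Finset.prod_congr rfl key, ← Nat.support_factorization]
  exact Nat.factorization_prod_pow_eq_self hd0

private lemma card_unitary (x : ℕ) (hx0 : x ≠ 0) :
    (x.divisors.filter (fun d => Nat.gcd d (x / d) = 1)).card
      = 2 ^ x.primeFactors.card := by
  classical
  rw [← Finset.card_powerset]
  refine (Finset.card_nbij' (fun d => d.primeFactors)
    (fun S => ∏ p ∈ S, p ^ x.factorization p) ?_ ?_ ?_ ?_).symm.symm
  · intro d hd
    rw [Finset.mem_coe, Finset.mem_filter, Nat.mem_divisors] at hd
    exact Finset.mem_powerset.mpr (Nat.primeFactors_mono hd.1.1 hx0)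
  · intro S hS
    obtain ⟨h1, h2, _⟩ := unitary_of_subset x hx0 (Finset.mem_powerset.mp hS)
    exact Finset.mem_filter.mpr ⟨Nat.mem_divisors.mpr ⟨h1, hx0⟩, h2⟩
  · intro d hd
    rw [Finset.mem_coe, Finset.mem_filter, Nat.mem_divisors] at hd
    exact eq_prod_of_unitary x hx0 hd.1.1 hd.2
  · intro S hS
    exact (unitary_of_subset x hx0 (Finset.mem_powerset.mp hS)).2.2

private lemma half_lemma (x : ℕ) (hx : 1 < x) :
    2 * ((x.divisors.filter (fun d => Nat.gcd d (x / d) = 1)).filter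
        (fun d => d * d < x)).card
      = (x.divisors.filter (fun d => Nat.gcd d (x / d) = 1)).card := by
  classical
  have hx0 : x ≠ 0 := by omega
  set U := x.divisors.filter (fun d => Nat.gcd d (x / d) = 1) with hU
  -- basic facts about members of U
  have hmem : ∀ d ∈ U, d ∣ x ∧ 0 < d ∧ 0 < x / d ∧ d * (x / d) = x ∧
      Nat.gcd d (x / d) = 1 ∧ x / d ∈ U := by
    intro d hd
    rw [hU, Finset.mem_filter, Nat.mem_divisors] at hd
    obtain ⟨⟨hdvd, _⟩, hcop⟩ := hd
    have hd0 : 0 < d := Nat.pos_of_dvd_of_pos hdvd (by omega)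
    have hxd : d * (x / d) = x := Nat.mul_div_cancel' hdvd
    have hm0 : 0 < x / d := Nat.div_pos (Nat.le_of_dvd (by omega) hdvd) hd0
    have hmmem : x / d ∈ U := by
      rw [hU, Finset.mem_filter, Nat.mem_divisors]
      refine ⟨⟨Nat.div_dvd_of_dvd hdvd, hx0⟩, ?_⟩
      rw [Nat.div_div_self hdvd hx0]
      exact (Nat.coprime_comm.mp hcop)
    exact ⟨hdvd, hd0, hm0, hxd, hcop, hmmem⟩
  have hne : ∀ d ∈ U, d * d ≠ x := by
    intro d hd h
    obtain ⟨hdvd, hd0, hm0, hxd, hcop, _⟩ := hmem d hd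
    have hmd : x / d = d := by
      have h2 : d * (x / d) = d * d := by rw [hxd]; exact h.symm
      exact (Nat.eq_of_mul_eq_mul_left hd0 h2)
    rw [hmd, Nat.gcd_self] at hcop
    rw [hcop] at h
    omega
  have hsplit := Finset.card_filter_add_card_filter_not
    (s := U) (p := fun d => d * d < x)
  have hbij : (U.filter (fun d => ¬ d * d < x)).card
      = (U.filter (fun d => d * d < x)).card := by
    refine Finset.card_nbij' (fun d => x / d) (fun d => x / d) ?_ ?_ ?_ ?_
    · intro d hd
      rw [Finset.mem_coe, Finset.mem_filter] at hd
      dsimp only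
      rw [Finset.mem_coe, Finset.mem_filter]
      obtain ⟨hdU, hds⟩ := hd
      obtain ⟨hdvd, hd0, hm0, hxd, hcop, hmU⟩ := hmem d hdU
      refine ⟨hmU, ?_⟩
      have hne' := hne d hdU
      have hdm : x / d < d := by
        by_contra h
        push_neg at h
        have : d * d ≤ d * (x / d) := Nat.mul_le_mul_left d h
        omega
      have h1 : x / d * (x / d) < x / d * d := Nat.mul_lt_mul_of_pos_left hdm hm0
      rw [mul_comm (x/d) d, hxd] at h1
      exact h1
    · intro d hd
      rw [Finset.mem_coe, Finset.mem_filter] at hd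
      dsimp only
      rw [Finset.mem_coe, Finset.mem_filter]
      obtain ⟨hdU, hds⟩ := hd
      obtain ⟨hdvd, hd0, hm0, hxd, hcop, hmU⟩ := hmem d hdU
      refine ⟨hmU, ?_⟩
      have hdm : d < x / d := by
        by_contra h
        push_neg at h
        have : d * (x / d) ≤ d * d := Nat.mul_le_mul_left d h
        omega
      intro hcon
      have h1 : x / d * d < x / d * (x / d) := Nat.mul_lt_mul_of_pos_left hdm hm0
      rw [mul_comm (x/d) d, hxd] at h1
      omega
    · intro d hd
      rw [Finset.mem_coe, Finset.mem_filter] at hd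
      exact Nat.div_div_self (hmem d hd.1).1 hx0
    · intro d hd
      rw [Finset.mem_coe, Finset.mem_filter] at hd
      exact Nat.div_div_self (hmem d hd.1).1 hx0
  omega

end Helpers

/-- For an odd integer `x > 1` with `n` distinct prime divisors, the number of
pairs of positive integers `(t, l)` with `l` odd, `gcd t l = 1` and
`x = l(l + 2t)` — i.e. the number of primitive Pythagorean triples having `x`
as the odd leg — is exactly `2^(n-1)`. -/
theorem number_of_triples_with_given_odd_leg (x : ℕ) (hx : 1 < x) (hxodd : Odd x) :
    {p : ℕ × ℕ | 0 < p.1 ∧ 0 < p.2 ∧ Odd p.2 ∧ Nat.gcd p.1 p.2 = 1 ∧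
      x = p.2 * (p.2 + 2 * p.1)}.ncard
      = 2 ^ (x.primeFactors.card - 1) := by
  classical
  have hx0 : x ≠ 0 := by omega
  have hx2 : x % 2 = 1 := Nat.odd_iff.mp hxodd
  set L := (x.divisors.filter (fun d => Nat.gcd d (x / d) = 1)).filter
      (fun d => d * d < x) with hL
  have hset : {p : ℕ × ℕ | 0 < p.1 ∧ 0 < p.2 ∧ Odd p.2 ∧ Nat.gcd p.1 p.2 = 1 ∧
      x = p.2 * (p.2 + 2 * p.1)} = (fun l => ((x / l - l) / 2, l)) '' ↑L := by
    ext ⟨t, l⟩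
    simp only [Set.mem_setOf_eq, Set.mem_image, Finset.mem_coe, hL, Finset.mem_filter,
      Nat.mem_divisors]
    constructor
    · rintro ⟨ht, hl, hlodd, hgcd, heq⟩
      have hl0 : 0 < l := hl
      have hxl : x / l = l + 2 * t := by
        rw [heq]; exact Nat.mul_div_cancel_left _ hl0
      refine ⟨l, ⟨⟨⟨⟨l + 2 * t, heq⟩, hx0⟩, ?_⟩, ?_⟩, ?_⟩
      · rw [hxl]
        have h2 : Nat.Coprime l 2 := by
          refine Nat.coprime_comm.mp (Nat.Prime.coprime_iff_not_dvd Nat.prime_two |>.mpr ?_)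
          rintro ⟨c, hc⟩
          have := Nat.odd_iff.mp hlodd
          omega
        have hlt : Nat.Coprime l t := Nat.coprime_comm.mp hgcd
        have h2t : Nat.Coprime l (2 * t) := h2.mul_right hlt
        have := (Nat.coprime_add_self_right (m := l) (n := 2 * t)).mpr h2t
        rwa [add_comm] at this
      · have hlt2 : l < l + 2 * t := by omega
        calc l * l < l * (l + 2 * t) := Nat.mul_lt_mul_of_pos_left hlt2 hl0
          _ = x := heq.symm
      · rw [hxl]
        have : (l + 2 * t - l) / 2 = t := by omega
        rw [this]
    · rintro ⟨u, ⟨⟨⟨hdvd, _⟩, hcop⟩, hlt⟩, hpair⟩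
      rename_i l
      have hl0 : 0 < u := Nat.pos_of_dvd_of_pos hdvd (by omega)
      have hxm : u * (x / u) = x := Nat.mul_div_cancel' hdvd
      set m := x / u with hm
      have hmdvd : m ∣ x := Nat.div_dvd_of_dvd hdvd
      have hlodd : u % 2 = 1 := by
        rcases Nat.even_or_odd u with he | ho
        · obtain ⟨c, hc⟩ := he
          have : 2 ∣ x := dvd_trans ⟨c, by omega⟩ hdvd
          omega
        · exact Nat.odd_iff.mp ho
      have hmodd : m % 2 = 1 := by
        rcases Nat.even_or_odd m with he | ho
        · obtain ⟨c, hc⟩ := he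
          have : 2 ∣ x := dvd_trans ⟨c, by omega⟩ hmdvd
          omega
        · exact Nat.odd_iff.mp ho
      have hlm : u < m := by
        have : u * u < u * m := by rw [hxm]; exact hlt
        exact Nat.lt_of_mul_lt_mul_left this
      have hmt : m = u + 2 * ((m - u) / 2) := by omega
      have h2t : Nat.Coprime u (2 * ((m - u) / 2)) := by
        have h3 : Nat.Coprime u (2 * ((m - u) / 2) + u) := by
          rw [add_comm, ← hmt]; exact hcop
        exact (Nat.coprime_add_self_right).mp h3
      have ht2 : Nat.Coprime u ((m - u) / 2) :=
        Nat.Coprime.coprime_dvd_right (dvd_mul_left _ 2) h2t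
      rw [Prod.mk.injEq] at hpair
      obtain ⟨hpt, hpl⟩ := hpair
      subst hpt; subst hpl
      refine ⟨by omega, hl0, Nat.odd_iff.mpr hlodd, Nat.coprime_comm.mp ht2, ?_⟩
      rw [← hmt, hxm]
  rw [hset, Set.ncard_image_of_injective _ (fun a b h => congrArg Prod.snd h),
    Set.ncard_coe_finset]
  have hcard := card_unitary x hx0
  have hhalf := half_lemma x hx
  have hn : 1 ≤ x.primeFactors.card :=
    Finset.Nonempty.card_pos (Nat.nonempty_primeFactors.mpr hx)
  have hpow : 2 ^ x.primeFactors.card = 2 * 2 ^ (x.primeFactors.card - 1) := by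
    rw [← pow_succ']
    congr 1
    omega
  rw [← hL] at hhalf
  omega
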